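/- Uniqueness for the multiparticle Skorohod system: fix T > 0, an integer n ≥ 1, continuous functions f₁, …, f_n : [0,T] → ℝ, v ∈ ℝ and K ≥ 0. If (I₁, V₁) and (I₂, V₂) are both solutions of the Skorohod system for (f, v, K), then I₁(t) = I₂(t) and V₁(t) = V₂(t) for all t ∈ [0,T]. -/

import Mathlib

open Set MeasureTheory Filter

/-- The Skorohod reflection term: `m_f(t) = sup_{0 ≤ s ≤ t} max(-f(s), 0)`. -/
noncomputable def mf (f : ℝ → ℝ) (t : ℝ) : ℝ :=
  sSup ((fun s => max (-f s) 0) '' Set.Icc 0 t)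

/-- `(I, V)` is a solution of the multiparticle Skorohod system for data `(f, v, K)`:
with `m_i(t) = sup_{0 ≤ s ≤ t} max(-(f_i(s) + I(s)), 0)`, one has
`V(t) = -v + (K/n) ∑ᵢ m_i(t)` and `I(t) = ∫₀ᵗ V(s) ds` on `[0,T]`. -/
def IsSkorohodSystemSol (T : ℝ) (n : ℕ) (f : Fin n → ℝ → ℝ) (v K : ℝ)
    (I V : ℝ → ℝ) : Prop :=
  ContinuousOn I (Set.Icc 0 T) ∧ ContinuousOn V (Set.Icc 0 T) ∧
  (∀ t ∈ Set.Icc 0 T,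
    V t = -v + (K / (n : ℝ)) * ∑ i, mf (fun s => f i s + I s) t) ∧
  (∀ t ∈ Set.Icc 0 T, I t = ∫ s in (0:ℝ)..t, V s)

private lemma mf_sub_le_aux {g₁ g₂ : ℝ → ℝ} {s ε : ℝ} (hs : 0 ≤ s)
    (hb₂ : BddAbove ((fun u => max (-g₂ u) 0) '' Set.Icc 0 s))
    (hε : 0 ≤ ε) (h : ∀ u ∈ Set.Icc 0 s, g₂ u ≤ g₁ u + ε) :
    mf g₁ s ≤ mf g₂ s + ε := by
  apply csSup_le (((Set.nonempty_Icc.2 hs).image _))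
  rintro x ⟨u, hu, rfl⟩
  have h1 : max (-g₁ u) 0 ≤ max (-g₂ u) 0 + ε := by
    have h2 : -g₁ u ≤ -g₂ u + ε := by linarith [h u hu]
    calc max (-g₁ u) 0 ≤ max (-g₂ u + ε) (0 + ε) := max_le_max h2 (by linarith)
      _ = max (-g₂ u) 0 + ε := by rw [max_add_add_right]
  exact h1.trans (add_le_add_left (le_csSup hb₂ ⟨u, hu, rfl⟩) ε)

private lemma abs_mf_sub_le {g₁ g₂ : ℝ → ℝ} {s ε : ℝ} (hs : 0 ≤ s)
    (hb₁ : BddAbove ((fun u => max (-g₁ u) 0) '' Set.Icc 0 s))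
    (hb₂ : BddAbove ((fun u => max (-g₂ u) 0) '' Set.Icc 0 s))
    (hε : 0 ≤ ε) (h : ∀ u ∈ Set.Icc 0 s, |g₁ u - g₂ u| ≤ ε) :
    |mf g₁ s - mf g₂ s| ≤ ε := by
  rw [abs_sub_le_iff]
  constructor
  · have := mf_sub_le_aux (g₁ := g₁) (g₂ := g₂) hs hb₂ hε (fun u hu => by
      have := abs_le.1 (h u hu); linarith [this.2])
    linarith
  · have := mf_sub_le_aux (g₁ := g₂) (g₂ := g₁) hs hb₁ hε (fun u hu => by
      have := abs_le.1 (h u hu); linarith [this.1])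
    linarith

/-- Uniqueness for the multiparticle Skorohod system: any two solutions agree on `[0,T]`. -/
theorem stmt_7 (T : ℝ) (hT : 0 < T) (n : ℕ) (hn : 1 ≤ n)
    (f : Fin n → ℝ → ℝ) (hf : ∀ i, ContinuousOn (f i) (Set.Icc 0 T))
    (v K : ℝ) (hK : 0 ≤ K)
    (I₁ V₁ I₂ V₂ : ℝ → ℝ)
    (h₁ : IsSkorohodSystemSol T n f v K I₁ V₁)
    (h₂ : IsSkorohodSystemSol T n f v K I₂ V₂) :
    ∀ t ∈ Set.Icc 0 T, I₁ t = I₂ t ∧ V₁ t = V₂ t := by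
  obtain ⟨hI₁c, hV₁c, hV₁, hI₁⟩ := h₁
  obtain ⟨hI₂c, hV₂c, hV₂, hI₂⟩ := h₂
  have hn0 : (n : ℝ) ≠ 0 := Nat.cast_ne_zero.2 (by omega)
  set D : ℝ → ℝ := fun t => I₁ t - I₂ t with hD
  have hDc : ContinuousOn D (Set.Icc 0 T) := hI₁c.sub hI₂c
  obtain ⟨C, hC⟩ := isCompact_Icc.exists_bound_of_continuousOn hDc
  have hC0 : 0 ≤ C := le_trans (norm_nonneg _) (hC 0 ⟨le_refl 0, hT.le⟩)
  have hbdd : ∀ (I : ℝ → ℝ), ContinuousOn I (Set.Icc 0 T) → ∀ i : Fin n, ∀ s ∈ Set.Icc 0 T,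
      BddAbove ((fun u => max (-(f i u + I u)) 0) '' Set.Icc 0 s) := by
    intro I hIc i s hs
    apply (isCompact_Icc.image_of_continuousOn _).bddAbove
    have hsub : Set.Icc (0:ℝ) s ⊆ Set.Icc 0 T := Set.Icc_subset_Icc le_rfl hs.2
    exact (((hf i).add hIc).mono hsub).neg.sup continuousOn_const
  have key : ∀ s ∈ Set.Icc 0 T, ∀ ε : ℝ, 0 ≤ ε → (∀ u ∈ Set.Icc 0 s, |D u| ≤ ε) →
      |V₁ s - V₂ s| ≤ K * ε := by
    intro s hs ε hε hDε
    rw [hV₁ s hs, hV₂ s hs]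
    have heach : ∀ i : Fin n,
        |mf (fun u => f i u + I₁ u) s - mf (fun u => f i u + I₂ u) s| ≤ ε := by
      intro i
      apply abs_mf_sub_le hs.1 (hbdd I₁ hI₁c i s hs) (hbdd I₂ hI₂c i s hs) hε
      intro u hu
      have heq : f i u + I₁ u - (f i u + I₂ u) = D u := by simp [hD]
      rw [heq]; exact hDε u hu
    have hsum : |∑ i : Fin n, (mf (fun u => f i u + I₁ u) s - mf (fun u => f i u + I₂ u) s)|
        ≤ n * ε := by
      calc |∑ i : Fin n, (mf (fun u => f i u + I₁ u) s - mf (fun u => f i u + I₂ u) s)|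
          ≤ ∑ i : Fin n, |mf (fun u => f i u + I₁ u) s - mf (fun u => f i u + I₂ u) s| :=
            Finset.abs_sum_le_sum_abs _ _
        _ ≤ ∑ _i : Fin n, ε := Finset.sum_le_sum fun i _ => heach i
        _ = n * ε := by simp [mul_comm]
    have heq : -v + K / (n:ℝ) * ∑ i, mf (fun u => f i u + I₁ u) s
        - (-v + K / (n:ℝ) * ∑ i, mf (fun u => f i u + I₂ u) s)
        = K / (n:ℝ) * ∑ i : Fin n, (mf (fun u => f i u + I₁ u) s
            - mf (fun u => f i u + I₂ u) s) := by
      rw [Finset.sum_sub_distrib]; ring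
    rw [heq, abs_mul, abs_of_nonneg (div_nonneg hK (Nat.cast_nonneg n))]
    calc K / (n:ℝ) * |∑ i : Fin n, (mf (fun u => f i u + I₁ u) s
            - mf (fun u => f i u + I₂ u) s)|
        ≤ K / (n:ℝ) * ((n:ℝ) * ε) :=
          mul_le_mul_of_nonneg_left hsum (div_nonneg hK (Nat.cast_nonneg n))
      _ = K * ε := by field_simp
  have hVint : ∀ t ∈ Set.Icc 0 T, IntervalIntegrable V₁ volume 0 t ∧
      IntervalIntegrable V₂ volume 0 t := by
    intro t ht
    have hsub : Set.uIcc (0:ℝ) t ⊆ Set.Icc 0 T := by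
      rw [Set.uIcc_of_le ht.1]; exact Set.Icc_subset_Icc le_rfl ht.2
    exact ⟨(hV₁c.mono hsub).intervalIntegrable, (hV₂c.mono hsub).intervalIntegrable⟩
  have main : ∀ m : ℕ, ∀ t ∈ Set.Icc 0 T, |D t| ≤ C * ((K * t) ^ m / m.factorial) := by
    intro m
    induction m with
    | zero => intro t ht; simpa using (Real.norm_eq_abs (D t) ▸ hC t ht)
    | succ m ih =>
      intro t ht
      have hDint : D t = ∫ s in (0:ℝ)..t, (V₁ s - V₂ s) := by
        simp only [hD]
        rw [hI₁ t ht, hI₂ t ht, intervalIntegral.integral_sub (hVint t ht).1 (hVint t ht).2]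
      set g : ℝ → ℝ := fun s => K * (C * ((K * s) ^ m / m.factorial)) with hg
      have hgint : IntervalIntegrable g volume 0 t := by
        apply Continuous.intervalIntegrable; fun_prop
      have hbound : ∀ s ∈ Set.uIoc (0:ℝ) t, ‖V₁ s - V₂ s‖ ≤ g s := by
        intro s hsI
        rw [Set.uIoc_of_le ht.1] at hsI
        have hs : s ∈ Set.Icc 0 T := ⟨hsI.1.le, hsI.2.trans ht.2⟩
        have hε : 0 ≤ C * ((K * s) ^ m / m.factorial) :=
          mul_nonneg hC0 (div_nonneg (pow_nonneg (mul_nonneg hK hsI.1.le) m)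
            (Nat.cast_nonneg _))
        rw [Real.norm_eq_abs]
        apply key s hs _ hε
        intro u hu
        have hu' : u ∈ Set.Icc 0 T := ⟨hu.1, hu.2.trans hs.2⟩
        refine (ih u hu').trans ?_
        have h1 : (K * u) ^ m ≤ (K * s) ^ m :=
          pow_le_pow_left₀ (mul_nonneg hK hu.1) (mul_le_mul_of_nonneg_left hu.2 hK) m
        have h2 : (K * u) ^ m / (m.factorial : ℝ) ≤ (K * s) ^ m / m.factorial := by
          gcongr
        exact mul_le_mul_of_nonneg_left h2 hC0
      have hle : |D t| ≤ |∫ s in (0:ℝ)..t, g s| := by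
        rw [hDint, ← Real.norm_eq_abs]
        exact intervalIntegral.norm_integral_le_abs_of_norm_le
          (ae_restrict_of_forall_mem measurableSet_uIoc hbound) hgint
      have hgval : ∫ s in (0:ℝ)..t, g s = C * ((K * t) ^ (m + 1) / (m + 1).factorial) := by
        have hgeq : ∀ s : ℝ, g s = (K * C * K ^ m / m.factorial) * s ^ m := by
          intro s; simp only [hg, mul_pow]; ring
        simp only [hgeq]
        rw [intervalIntegral.integral_const_mul, integral_pow]
        have : ((m + 1).factorial : ℝ) = (m + 1) * m.factorial := by
          push_cast [Nat.factorial_succ]; ring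
        rw [this]
        have hm : (m.factorial : ℝ) ≠ 0 := Nat.cast_ne_zero.2 m.factorial_ne_zero
        field_simp
        ring
      have hnn : 0 ≤ C * ((K * t) ^ (m + 1) / ((m + 1).factorial : ℝ)) :=
        mul_nonneg hC0 (div_nonneg (pow_nonneg (mul_nonneg hK ht.1) _) (Nat.cast_nonneg _))
      rw [hgval, abs_of_nonneg hnn] at hle
      exact hle
  have hDzero : ∀ t ∈ Set.Icc 0 T, D t = 0 := by
    intro t ht
    have h0 : Tendsto (fun m : ℕ => C * ((K * t) ^ m / m.factorial)) atTop (nhds 0) := by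
      have := FloorSemiring.tendsto_pow_div_factorial_atTop (K := ℝ) (K * t)
      simpa using this.const_mul C
    have hle : |D t| ≤ 0 := ge_of_tendsto h0 (Filter.Eventually.of_forall fun m => main m t ht)
    exact abs_eq_zero.mp (le_antisymm hle (abs_nonneg _))
  intro t ht
  have hIeq : I₁ t = I₂ t := by have := hDzero t ht; simp [hD] at this; linarith
  refine ⟨hIeq, ?_⟩
  rw [hV₁ t ht, hV₂ t ht]
  congr 1
  congr 1
  apply Finset.sum_congr rfl
  intro i _
  unfold mf
  congr 1
  apply Set.image_congr
  intro u hu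
  have heq : I₁ u = I₂ u := by
    have := hDzero u ⟨hu.1, hu.2.trans ht.2⟩; simp [hD] at this; linarith
  show max (-(f i u + I₁ u)) 0 = max (-(f i u + I₂ u)) 0
  rw [heq]
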